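/- Let G be a group with a left-invariant total order ≤, and let ≤_C be the relation defined by f ≤_C g iff fh ≤ gh for all h. For any positive integer n and any f ∈ G, if f^n ≤_C 1 then f ≤_C 1. -/

import Mathlib

/-- With `≤_C` defined from a left-invariant total order,
`f^n ≤_C 1` for a positive integer `n` implies `f ≤_C 1`. -/
theorem leC_root
    (G : Type*) [Group G] (le : G → G → Prop)
    (hlin : IsLinearOrder G le)
    (hleft : ∀ f g h : G, le g h → le (f * g) (f * h))
    (leC : G → G → Prop)
    (hleC : ∀ f g : G, leC f g ↔ ∀ h : G, le (f * h) (g * h))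
    (n : ℕ) (hn : 0 < n) (f : G) (h : leC (f ^ n) 1) :
    leC f 1 := by
  rw [hleC] at h ⊢
  intro x
  simp only [one_mul] at h ⊢
  by_contra hx
  have h1 : le x (f * x) :=
    (hlin.toTotal.total (f * x) x).resolve_left hx
  have key : ∀ k : ℕ, le x (f ^ k * x) := by
    intro k
    induction k with
    | zero =>
        simpa using hlin.toIsPartialOrder.toIsPreorder.toRefl.refl x
    | succ k ih =>
        have h2 : le (f * x) (f * (f ^ k * x)) := hleft f _ _ ih
        have h3 : le x (f * (f ^ k * x)) :=
          hlin.toIsPartialOrder.toIsPreorder.toIsTrans.trans _ _ _ h1 h2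
        simpa [pow_succ', mul_assoc] using h3
  obtain ⟨m, rfl⟩ := Nat.exists_eq_succ_of_ne_zero hn.ne'
  have h4 : le (f * x) (f * (f ^ m * x)) := hleft f _ _ (key m)
  have h5' : le (f * (f ^ m * x)) x := by
    have := h x
    simpa [pow_succ', mul_assoc] using this
  exact hx (hlin.toIsPartialOrder.toIsPreorder.toIsTrans.trans _ _ _ h4 h5')
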